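/- The quantum walk intertwines the functional calculus of the Dirichlet transition operator: U'_M d_{+,M}* = d_{+,M}* exp(i·arccos(T'_M)) and U'_M d_{−,M}* = d_{−,M}* exp(−i·arccos(T'_M)) as operators from ℓ²(V') to ℓ²(A'). -/

import Mathlib

/- Setting: G' = (V', A') a connected locally finite graph, arcs = darts of a simple
graph `G`; `e.fst` = origin, `e.snd` = terminus, `e.symm` = reversed arc; `α` a weight
on arcs with `Σ_{a : o(a)=v} |α(a)|² = 1`, and `M` a set of marked vertices. ℓ²(A')
and ℓ²(V') are the `lp _ 2` spaces; the marked boundary operators and the shift are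
characterized by their pointwise formulas. -/

noncomputable section
open scoped ComplexConjugate ComplexInnerProductSpace Classical
open Complex Filter Topology ContinuousLinearMap

namespace GroverStmtB

/-- ℓ²(V') -/
abbrev lV (V : Type) : Type := lp (fun _ : V => ℂ) 2

/-- port: the self-adjoint continuous functional calculus on `lV W →L[ℂ] lV W`
(Mathlib's instance, which instance search no longer finds unaided). -/
instance instCFClV (W : Type) :
    ContinuousFunctionalCalculus ℝ (lV W →L[ℂ] lV W) IsSelfAdjoint :=
  IsSelfAdjoint.instContinuousFunctionalCalculus

variable {V : Type} (G : SimpleGraph V)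

/-- ℓ²(A') where A' is the set of symmetric arcs (darts) of `G`. -/
abbrev lA : Type := lp (fun _ : G.Dart => ℂ) 2

/-- the weight condition `Σ_{a : o(a)=v} |α(a)|² = 1` for every vertex `v`. -/
def IsWeight (α : G.Dart → ℂ) : Prop :=
  ∀ v : V, ∑' a : {a : G.Dart // a.fst = v}, ‖α a.1‖ ^ 2 = 1

/-- `(S'ψ)(e) = ψ(ē)` -/
def IsShift (S : lA G →L[ℂ] lA G) : Prop :=
  ∀ (ψ : lA G) (e : G.Dart), S ψ e = ψ e.symm

variable (α : G.Dart → ℂ) (M : Set V)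

/-- `(d_{T,M}ψ)(v) = Σ_{e : t(e)=v} α(ē)ψ(e)` for `v ∉ M`, `= 0` for `v ∈ M`. -/
def IsMarkedT (dTM : lA G →L[ℂ] lV V) : Prop :=
  (∀ (ψ : lA G) (v : V), v ∉ M →
      dTM ψ v = ∑' e : {e : G.Dart // e.snd = v}, α e.1.symm * ψ e.1) ∧
  (∀ (ψ : lA G) (v : V), v ∈ M → dTM ψ v = 0)

/-- `(d_{O,M}ψ)(v) = Σ_{e : o(e)=v} α(e)ψ(e)` for `v ∉ M`, `= 0` for `v ∈ M`. -/
def IsMarkedO (dOM : lA G →L[ℂ] lV V) : Prop :=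
  (∀ (ψ : lA G) (v : V), v ∉ M →
      dOM ψ v = ∑' e : {e : G.Dart // e.fst = v}, α e.1 * ψ e.1) ∧
  (∀ (ψ : lA G) (v : V), v ∈ M → dOM ψ v = 0)

/-- the Dirichlet transition operator `T'_M = d_{T,M} d_{O,M}*`. -/
def TM (dTM dOM : lA G →L[ℂ] lV V) : lV V →L[ℂ] lV V := dTM ∘L adjoint dOM

/-- `exp(s·i·arccos(T'_M))` via the continuous functional calculus for `T'_M`. -/
def expArc (dTM dOM : lA G →L[ℂ] lV V) (s : ℂ) : lV V →L[ℂ] lV V :=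
  NormedSpace.exp ((s * Complex.I) • cfc Real.arccos (TM G dTM dOM))

/-- `(2(1 − T'_M²))^(−1/2)` via the continuous functional calculus for `T'_M`. -/
def invSqrt (dTM dOM : lA G →L[ℂ] lV V) : lV V →L[ℂ] lV V :=
  cfc (fun x : ℝ => (Real.sqrt (2 * (1 - x ^ 2)))⁻¹) (TM G dTM dOM)

/-- `d_{±,M}* = (d_{T,M}* − d_{O,M}*·exp(±i·arccos T'_M))·(2(1−T'_M²))^(−1/2)`,
with `s = 1` for the `+` sign and `s = −1` for the `−` sign. -/
def dpmStar (dTM dOM : lA G →L[ℂ] lV V) (s : ℂ) : lV V →L[ℂ] lA G :=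
  (adjoint dTM - adjoint dOM ∘L expArc G dTM dOM s) ∘L invSqrt G dTM dOM

/-- the quantum walk `U'_M = S'(2 d_{T,M}* d_{T,M} − 1)` induced by the Dirichlet
random walk. -/
def UM (S : lA G →L[ℂ] lA G) (dTM : lA G →L[ℂ] lV V) : lA G →L[ℂ] lA G :=
  S ∘L ((2 : ℂ) • ((adjoint dTM) ∘L dTM) - 1)

section Aux

variable {V : Type} {G : SimpleGraph V} {α : G.Dart → ℂ} {M : Set V}
variable {dTM dOM : lA G →L[ℂ] lV V} {S : lA G →L[ℂ] lA G}

/-- the dart-reversal equivalence between out-arcs and in-arcs at `v`. -/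
def symmEquiv (G : SimpleGraph V) (v : V) :
    {e : G.Dart // e.fst = v} ≃ {e : G.Dart // e.snd = v} where
  toFun e := ⟨e.1.symm, e.2⟩
  invFun e := ⟨e.1.symm, e.2⟩
  left_inv e := Subtype.ext (SimpleGraph.Dart.symm_symm e.1)
  right_inv e := Subtype.ext (SimpleGraph.Dart.symm_symm e.1)

lemma dTM_single (hdTM : IsMarkedT G α M dTM) (e : G.Dart) (v : V) :
    dTM (lp.single 2 e (1:ℂ)) v = if e.snd = v ∧ v ∉ M then α e.symm else 0 := by
  by_cases hv : v ∈ M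
  · rw [hdTM.2 _ v hv, if_neg (by tauto)]
  rw [hdTM.1 _ v hv]
  by_cases he : e.snd = v
  · rw [if_pos ⟨he, hv⟩, tsum_eq_single (⟨e, he⟩ : {e' : G.Dart // e'.snd = v})]
    · rw [lp.single_apply_self, mul_one]
    · rintro ⟨e', he'⟩ hne
      rw [lp.single_apply_ne _ _ _ (fun h => hne (Subtype.ext h)), mul_zero]
  · rw [if_neg (by tauto), tsum_congr (fun e' => ?_), tsum_zero]
    rw [lp.single_apply_ne _ _ _ (fun h => he (by rw [← h]; exact e'.2)), mul_zero]

lemma dOM_single (hdOM : IsMarkedO G α M dOM) (e : G.Dart) (v : V) :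
    dOM (lp.single 2 e (1:ℂ)) v = if e.fst = v ∧ v ∉ M then α e else 0 := by
  by_cases hv : v ∈ M
  · rw [hdOM.2 _ v hv, if_neg (by tauto)]
  rw [hdOM.1 _ v hv]
  by_cases he : e.fst = v
  · rw [if_pos ⟨he, hv⟩, tsum_eq_single (⟨e, he⟩ : {e' : G.Dart // e'.fst = v})]
    · rw [lp.single_apply_self, mul_one]
    · rintro ⟨e', he'⟩ hne
      rw [lp.single_apply_ne _ _ _ (fun h => hne (Subtype.ext h)), mul_zero]
  · rw [if_neg (by tauto), tsum_congr (fun e' => ?_), tsum_zero]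
    rw [lp.single_apply_ne _ _ _ (fun h => he (by rw [← h]; exact e'.2)), mul_zero]

lemma adjT_apply (hdTM : IsMarkedT G α M dTM) (f : lV V) (e : G.Dart) :
    adjoint dTM f e = if e.snd ∉ M then conj (α e.symm) * f e.snd else 0 := by
  have h2 : (⟪f, dTM (lp.single 2 e (1:ℂ))⟫) = (⟪(adjoint dTM f) e, (1:ℂ)⟫) := by
    rw [← ContinuousLinearMap.adjoint_inner_left, lp.inner_single_right]
  rw [lp.inner_eq_tsum] at h2
  simp only [RCLike.inner_apply, mul_one] at h2
  rw [tsum_eq_single e.snd (fun v hv => by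
    rw [dTM_single hdTM, if_neg (fun h => hv h.1.symm), zero_mul])] at h2
  rw [dTM_single hdTM] at h2
  have h3 := congrArg (starRingEnd ℂ) h2
  simp only [RingHomCompTriple.comp_apply, RingHom.id_apply, starRingEnd_self_apply, one_mul] at h3
  rw [← h3]
  by_cases hM : e.snd ∈ M
  · simp [hM]
  · simp [hM, mul_comm]

lemma adjO_apply (hdOM : IsMarkedO G α M dOM) (f : lV V) (e : G.Dart) :
    adjoint dOM f e = if e.fst ∉ M then conj (α e) * f e.fst else 0 := by
  have h2 : (⟪f, dOM (lp.single 2 e (1:ℂ))⟫) = (⟪(adjoint dOM f) e, (1:ℂ)⟫) := by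
    rw [← ContinuousLinearMap.adjoint_inner_left, lp.inner_single_right]
  rw [lp.inner_eq_tsum] at h2
  simp only [RCLike.inner_apply, mul_one] at h2
  rw [tsum_eq_single e.fst (fun v hv => by
    rw [dOM_single hdOM, if_neg (fun h => hv h.1.symm), zero_mul])] at h2
  rw [dOM_single hdOM] at h2
  have h3 := congrArg (starRingEnd ℂ) h2
  simp only [RingHomCompTriple.comp_apply, RingHom.id_apply, starRingEnd_self_apply, one_mul] at h3
  rw [← h3]
  by_cases hM : e.fst ∈ M
  · simp [hM]
  · simp [hM, mul_comm]

lemma S_adjT (hS : IsShift G S) (hdTM : IsMarkedT G α M dTM) (hdOM : IsMarkedO G α M dOM) :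
    S ∘L adjoint dTM = adjoint dOM := by
  ext f e
  have h1 : (S ∘L adjoint dTM) f e = adjoint dTM f e.symm := hS _ _
  rw [ContinuousLinearMap.comp_apply] at h1 ⊢
  rw [h1, adjT_apply hdTM, adjO_apply hdOM, SimpleGraph.Dart.symm_symm]
  rfl

lemma S_adjO (hS : IsShift G S) (hdTM : IsMarkedT G α M dTM) (hdOM : IsMarkedO G α M dOM) :
    S ∘L adjoint dOM = adjoint dTM := by
  ext f e
  have h1 : (S ∘L adjoint dOM) f e = adjoint dOM f e.symm := hS _ _
  rw [ContinuousLinearMap.comp_apply] at h1 ⊢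
  rw [h1, adjO_apply hdOM, adjT_apply hdTM]
  rfl

lemma weight_sum (hα : IsWeight G α) (v : V) :
    ∑' a : {a : G.Dart // a.fst = v}, α a.1 * conj (α a.1) = 1 := by
  have h := hα v
  have hsum : Summable (fun a : {a : G.Dart // a.fst = v} => ‖α a.1‖ ^ 2) := by
    by_contra hns
    rw [tsum_eq_zero_of_not_summable hns] at h
    norm_num at h
  have h2 := (hsum.hasSum.mapL Complex.ofRealCLM).tsum_eq
  simp only [Complex.ofRealCLM_apply] at h2
  calc ∑' a : {a : G.Dart // a.fst = v}, α a.1 * conj (α a.1)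
      = ∑' a : {a : G.Dart // a.fst = v}, ((‖α a.1‖ ^ 2 : ℝ) : ℂ) := by
        exact tsum_congr fun a => by rw [Complex.mul_conj']; push_cast; ring
    _ = ((∑' a : {a : G.Dart // a.fst = v}, ‖α a.1‖ ^ 2 : ℝ) : ℂ) := h2
    _ = 1 := by rw [h]; norm_num

lemma dTM_adjT (hα : IsWeight G α) (hdTM : IsMarkedT G α M dTM) (f : lV V) (v : V)
    (hv : v ∉ M) : dTM (adjoint dTM f) v = f v := by
  rw [hdTM.1 _ v hv]
  have hterm : ∀ e : {e : G.Dart // e.snd = v},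
      α e.1.symm * (adjoint dTM f) e.1 = (α e.1.symm * conj (α e.1.symm)) * f v := by
    intro e
    rw [adjT_apply hdTM, e.2, if_pos hv, mul_assoc]
  rw [tsum_congr hterm, tsum_mul_right]
  have hEq := Equiv.tsum_eq (symmEquiv G v)
      (fun e : {e : G.Dart // e.snd = v} => α e.1.symm * conj (α e.1.symm))
  simp only [symmEquiv, Equiv.coe_fn_mk, SimpleGraph.Dart.symm_symm] at hEq
  rw [← hEq, weight_sum hα, one_mul]

lemma adjT_dTM_adjT (hα : IsWeight G α) (hdTM : IsMarkedT G α M dTM) :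
    adjoint dTM ∘L (dTM ∘L adjoint dTM) = adjoint dTM := by
  ext f e
  simp only [ContinuousLinearMap.comp_apply]
  rw [adjT_apply hdTM, adjT_apply hdTM]
  by_cases hM : e.snd ∈ M
  · simp [hM]
  · simp only [hM, not_false_iff, if_true]
    rw [dTM_adjT hα hdTM f e.snd hM]

lemma dOM_adjT_eq (hdTM : IsMarkedT G α M dTM) (hdOM : IsMarkedO G α M dOM) :
    dOM ∘L adjoint dTM = dTM ∘L adjoint dOM := by
  ext f v
  simp only [ContinuousLinearMap.comp_apply]
  by_cases hv : v ∈ M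
  · rw [hdOM.2 _ v hv, hdTM.2 _ v hv]
  rw [hdOM.1 _ v hv, hdTM.1 _ v hv]
  have hEq := Equiv.tsum_eq (symmEquiv G v)
      (fun e : {e : G.Dart // e.snd = v} => α e.1.symm * (adjoint dOM f) e.1)
  rw [← hEq]
  refine tsum_congr fun e => ?_
  rw [adjT_apply hdTM, adjO_apply hdOM]
  simp [symmEquiv, SimpleGraph.Dart.symm_symm]

lemma TM_selfAdjoint (hdTM : IsMarkedT G α M dTM) (hdOM : IsMarkedO G α M dOM) :
    IsSelfAdjoint (TM G dTM dOM) := by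
  rw [ContinuousLinearMap.isSelfAdjoint_iff']
  rw [TM, ContinuousLinearMap.adjoint_comp, ContinuousLinearMap.adjoint_adjoint]
  exact dOM_adjT_eq hdTM hdOM

lemma adjO_dTM_adjT (hα : IsWeight G α) (hdTM : IsMarkedT G α M dTM)
    (hdOM : IsMarkedO G α M dOM) :
    adjoint dOM ∘L (dTM ∘L adjoint dTM) = adjoint dOM := by
  ext f e
  simp only [ContinuousLinearMap.comp_apply]
  rw [adjO_apply hdOM, adjO_apply hdOM]
  by_cases hM : e.fst ∈ M
  · simp [hM]
  · simp only [hM, not_false_iff, if_true]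
    rw [dTM_adjT hα hdTM f e.fst hM]

end Aux


section CFCpart

variable {V : Type}

lemma spectrum_fact (a : lV V →L[ℂ] lV V) (ha : IsSelfAdjoint a) (hnorm : ‖a‖ < 1) :
    ∀ z ∈ spectrum ℂ a, z = (z.re : ℂ) ∧ |z.re| < 1 := by
  intro z hz
  have h1 : z = (z.re : ℂ) := ha.mem_spectrum_eq_re hz
  refine ⟨h1, ?_⟩
  have h2 : ‖z‖ ≤ ‖a‖ * ‖(1 : lV V →L[ℂ] lV V)‖ := spectrum.norm_le_norm_mul_of_mem hz
  have h3 : ‖(1 : lV V →L[ℂ] lV V)‖ ≤ 1 := by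
    rw [ContinuousLinearMap.one_def]; exact ContinuousLinearMap.norm_id_le
  have h4 : |z.re| ≤ ‖z‖ := by exact Complex.abs_re_le_norm z
  nlinarith [norm_nonneg a, norm_nonneg (1 : lV V →L[ℂ] lV V), norm_nonneg z]

lemma cont_g (s : ℂ) :
    Continuous (fun z : ℂ => Complex.exp (s * Complex.I * (Real.arccos z.re : ℂ))) := by
  exact Complex.continuous_exp.comp (continuous_const.mul
    (Complex.continuous_ofReal.comp (Real.continuous_arccos.comp Complex.continuous_re)))

lemma expArc_eq_cfc (a : lV V →L[ℂ] lV V) (ha : IsSelfAdjoint a) (s : ℂ) :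
    NormedSpace.exp ((s * Complex.I) • cfc Real.arccos a)
      = cfc (fun z : ℂ => Complex.exp (s * Complex.I * (Real.arccos z.re : ℂ))) a := by
  have hac : Continuous (fun z : ℂ => ((Real.arccos z.re : ℝ) : ℂ)) :=
    Complex.continuous_ofReal.comp (Real.continuous_arccos.comp Complex.continuous_re)
  have h1 : cfc Real.arccos a = cfc (fun z : ℂ => ((Real.arccos z.re : ℝ) : ℂ)) a :=
    cfc_real_eq_complex Real.arccos ha
  have h2 : (s * Complex.I) • cfc (fun z : ℂ => ((Real.arccos z.re : ℝ) : ℂ)) a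
      = cfc (fun z : ℂ => s * Complex.I * (Real.arccos z.re : ℂ)) a := by
    rw [← cfc_smul (s * Complex.I) _ a hac.continuousOn]
    simp [smul_eq_mul]
  rw [h1, h2]
  have hb : IsStarNormal (cfc (fun z : ℂ => s * Complex.I * (Real.arccos z.re : ℂ)) a) :=
    cfc_predicate _ a
  rw [← CFC.complex_exp_eq_normedSpace_exp hb,
    ← cfc_comp' Complex.exp (fun z : ℂ => s * Complex.I * (Real.arccos z.re : ℂ)) a Complex.continuous_exp.continuousOn
      (continuous_const.mul hac).continuousOn ha.isStarNormal]

lemma scalar_quad (s : ℂ) (hs : s = 1 ∨ s = -1) (θ : ℝ) (x : ℝ)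
    (hx : (x : ℂ) = Complex.cos (θ : ℂ)) :
    Complex.exp (s * Complex.I * (θ : ℂ)) * Complex.exp (s * Complex.I * (θ : ℂ))
      - 2 * ((x : ℂ) * Complex.exp (s * Complex.I * (θ : ℂ))) + 1 = 0 := by
  have h := Complex.sin_sq_add_cos_sq (θ : ℂ)
  have hI := Complex.I_sq
  rcases hs with rfl | rfl
  · rw [hx, show (1:ℂ) * Complex.I * (θ:ℂ) = (θ:ℂ) * Complex.I by ring, Complex.exp_mul_I]
    linear_combination (-1:ℂ) * h + (Complex.sin (θ:ℂ)) ^ 2 * hI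
  · rw [hx, show (-1:ℂ) * Complex.I * (θ:ℂ) = (-(θ:ℂ)) * Complex.I by ring,
      Complex.exp_mul_I, Complex.cos_neg, Complex.sin_neg]
    linear_combination (-1:ℂ) * h + (Complex.sin (θ:ℂ)) ^ 2 * hI

lemma quad_op (a : lV V →L[ℂ] lV V) (ha : IsSelfAdjoint a) (hnorm : ‖a‖ < 1)
    (s : ℂ) (hs : s = 1 ∨ s = -1) :
    cfc (fun z : ℂ => Complex.exp (s * Complex.I * (Real.arccos z.re : ℂ))) a
        * cfc (fun z : ℂ => Complex.exp (s * Complex.I * (Real.arccos z.re : ℂ))) a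
      - (2:ℂ) • (a * cfc (fun z : ℂ => Complex.exp (s * Complex.I * (Real.arccos z.re : ℂ))) a)
      + 1 = 0 := by
  set g : ℂ → ℂ := fun z => Complex.exp (s * Complex.I * (Real.arccos z.re : ℂ)) with hg
  have hgc : Continuous g := cont_g s
  have hzg : Continuous (fun z : ℂ => z * g z) := continuous_id.mul hgc
  have h1 : cfc g a * cfc g a = cfc (fun z => g z * g z) a :=
    (cfc_mul g g a hgc.continuousOn hgc.continuousOn).symm
  have h2 : a * cfc g a = cfc (fun z => z * g z) a := by
    conv_rhs => rw [cfc_mul (fun z : ℂ => z) g a continuous_id.continuousOn hgc.continuousOn,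
      cfc_id' ℂ a ha.isStarNormal]
  have h3 : (2:ℂ) • cfc (fun z : ℂ => z * g z) a = cfc (fun z : ℂ => 2 * (z * g z)) a := by
    rw [← cfc_smul (2:ℂ) (fun z : ℂ => z * g z) a hzg.continuousOn]
    simp [smul_eq_mul]
  have h4 : (1 : lV V →L[ℂ] lV V) = cfc (fun _ : ℂ => (1:ℂ)) a :=
    (cfc_const_one ℂ a ha.isStarNormal).symm
  rw [h1, h2, h3, h4,
    ← cfc_sub (fun z : ℂ => g z * g z) (fun z : ℂ => 2 * (z * g z)) a (hgc.mul hgc).continuousOn (continuous_const.mul hzg).continuousOn,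
    ← cfc_add a (fun z : ℂ => g z * g z - 2 * (z * g z)) (fun _ : ℂ => (1:ℂ)) (((hgc.mul hgc).sub (continuous_const.mul hzg)).continuousOn)
      continuous_const.continuousOn]
  have heq : (spectrum ℂ a).EqOn
      (fun z : ℂ => g z * g z - 2 * (z * g z) + 1) (fun _ : ℂ => 0) := by
    intro z hz
    obtain ⟨hre, hlt⟩ := spectrum_fact a ha hnorm z hz
    have hx : ((z.re : ℝ) : ℂ) = Complex.cos ((Real.arccos z.re : ℝ) : ℂ) := by
      rw [← Complex.ofReal_cos, Real.cos_arccos (by nlinarith [abs_lt.mp hlt])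
        (by nlinarith [abs_lt.mp hlt])]
    have := scalar_quad s hs (Real.arccos z.re) z.re hx
    simp only [hg]
    rw [hre] at *
    simpa using this
  rw [cfc_congr heq]
  exact cfc_const_zero ℂ a

lemma cfc_comm' (a : lV V →L[ℂ] lV V) (ha : IsSelfAdjoint a) (f g : ℂ → ℂ)
    (hf : ContinuousOn f (spectrum ℂ a)) (hg : ContinuousOn g (spectrum ℂ a)) :
    cfc f a * cfc g a = cfc g a * cfc f a := by
  rw [← cfc_mul f g a hf hg, ← cfc_mul g f a hg hf]
  exact cfc_congr fun z _ => mul_comm _ _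

lemma cont_r (a : lV V →L[ℂ] lV V) (ha : IsSelfAdjoint a) (hnorm : ‖a‖ < 1) :
    ContinuousOn (fun z : ℂ => (((Real.sqrt (2 * (1 - z.re ^ 2)))⁻¹ : ℝ) : ℂ))
      (spectrum ℂ a) := by
  intro z hz
  obtain ⟨-, hlt⟩ := spectrum_fact a ha hnorm z hz
  apply ContinuousAt.continuousWithinAt
  have hpos : (0:ℝ) < 2 * (1 - z.re ^ 2) := by nlinarith [abs_lt.mp hlt]
  have hne : Real.sqrt (2 * (1 - z.re ^ 2)) ≠ 0 := (Real.sqrt_pos.mpr hpos).ne'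
  have hc : ContinuousAt (fun z : ℂ => Real.sqrt (2 * (1 - z.re ^ 2))) z := by fun_prop
  exact Complex.continuous_ofReal.continuousAt.comp (hc.inv₀ hne)

end CFCpart

set_option maxHeartbeats 2000000 in
/-- `U'_M d_{+,M}* = d_{+,M}* exp(i·arccos T'_M)` and
`U'_M d_{−,M}* = d_{−,M}* exp(−i·arccos T'_M)`. -/
theorem statement15 {V : Type} (G : SimpleGraph V)
    [∀ v : V, Fintype (G.neighborSet v)] (hconn : G.Connected)
    (α : G.Dart → ℂ) (M : Set V) (hα : IsWeight G α)
    (dTM dOM : lA G →L[ℂ] lV V) (S : lA G →L[ℂ] lA G)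
    (hdTM : IsMarkedT G α M dTM) (hdOM : IsMarkedO G α M dOM) (hS : IsShift G S)
    -- σ(T'_M) ⊆ (−1, 1), equivalently ‖T'_M‖ < 1
    (hT : ‖TM G dTM dOM‖ < 1) :
    (UM G S dTM ∘L dpmStar G dTM dOM 1 =
      dpmStar G dTM dOM 1 ∘L expArc G dTM dOM 1) ∧
    (UM G S dTM ∘L dpmStar G dTM dOM (-1) =
      dpmStar G dTM dOM (-1) ∘L expArc G dTM dOM (-1)) := by
  have ha : IsSelfAdjoint (TM G dTM dOM) := TM_selfAdjoint hdTM hdOM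
  have main : ∀ s : ℂ, s = 1 ∨ s = -1 →
      UM G S dTM ∘L dpmStar G dTM dOM s = dpmStar G dTM dOM s ∘L expArc G dTM dOM s := by
    intro s hs
    set a := TM G dTM dOM with haDef
    have hgc := cont_g s
    have hE : expArc G dTM dOM s
        = cfc (fun z : ℂ => Complex.exp (s * Complex.I * (Real.arccos z.re : ℂ))) a :=
      expArc_eq_cfc a ha s
    have hR : invSqrt G dTM dOM
        = cfc (fun z : ℂ => (((Real.sqrt (2 * (1 - z.re ^ 2)))⁻¹ : ℝ) : ℂ)) a :=
      cfc_real_eq_complex _ ha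
    have hRE : invSqrt G dTM dOM ∘L expArc G dTM dOM s
        = expArc G dTM dOM s ∘L invSqrt G dTM dOM := by
      rw [hE, hR]
      exact cfc_comm' a ha _ _ (cont_r a ha hT) hgc.continuousOn
    have hquad := quad_op a ha hT s hs
    rw [← hE] at hquad
    have hSDT := S_adjT hS hdTM hdOM
    have hSDO := S_adjO hS hdTM hdOM
    have hDO3 := adjO_dTM_adjT hα hdTM hdOM
    have hSDT' : ∀ x, S ((adjoint dTM) x) = (adjoint dOM) x := fun x => by
      simpa using DFunLike.congr_fun hSDT x
    have hSDO' : ∀ x, S ((adjoint dOM) x) = (adjoint dTM) x := fun x => by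
      simpa using DFunLike.congr_fun hSDO x
    have hDO3' : ∀ x, (adjoint dOM) (dTM ((adjoint dTM) x)) = (adjoint dOM) x := fun x => by
      simpa using DFunLike.congr_fun hDO3 x
    have hREf : ∀ x, invSqrt G dTM dOM (expArc G dTM dOM s x)
        = expArc G dTM dOM s (invSqrt G dTM dOM x) := fun x => by
      simpa using DFunLike.congr_fun hRE x
    have hTMf : ∀ x, dTM ((adjoint dOM) x) = a x := fun _ => rfl
    have hquadf : ∀ x, expArc G dTM dOM s (expArc G dTM dOM s x)
        - (2:ℂ) • (a (expArc G dTM dOM s x)) + x = 0 := fun x => by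
      have h := DFunLike.congr_fun hquad x
      simpa [ContinuousLinearMap.add_apply, ContinuousLinearMap.sub_apply,
        ContinuousLinearMap.mul_apply, ContinuousLinearMap.smul_apply,
        ContinuousLinearMap.one_apply] using h
    refine ContinuousLinearMap.ext fun f => ?_
    set w := invSqrt G dTM dOM f with hw
    set E := expArc G dTM dOM s with hEdef
    simp only [UM, dpmStar, ContinuousLinearMap.comp_apply, ContinuousLinearMap.sub_apply,
      ContinuousLinearMap.smul_apply, ContinuousLinearMap.one_apply, map_sub, map_smul,
      hSDT', hSDO', hDO3', hREf, hTMf, ← hw, ← hEdef]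
    have h0 : (adjoint dOM) (E (E w)) - (2:ℂ) • (adjoint dOM) (a (E w)) + (adjoint dOM) w
        = 0 := by
      have := congrArg (adjoint dOM) (hquadf w)
      simpa [map_sub, map_add, map_smul] using this
    have h1 : (adjoint dOM) (E (E w))
        = (2:ℂ) • (adjoint dOM) (a (E w)) - (adjoint dOM) w := by
      rw [eq_sub_iff_add_eq, ← sub_eq_zero]
      calc (adjoint dOM) (E (E w)) + (adjoint dOM) w - (2:ℂ) • (adjoint dOM) (a (E w))
          = (adjoint dOM) (E (E w)) - (2:ℂ) • (adjoint dOM) (a (E w)) + (adjoint dOM) w := by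
            abel
        _ = 0 := h0
    rw [h1]
    module
  exact ⟨main 1 (Or.inl rfl), main (-1) (Or.inr rfl)⟩


end GroverStmtB
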